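/- arXiv:1809.10491 — 4 statements merged into one kernel-verified Lean document; each statement's English description precedes it below -/
import Mathlib

section
/- (Lemma 3, rank-one projection condition.) Let w ∈ R^d be a unit vector and let X ∈ R^{d×d} be symmetric positive semidefinite. Let η > 0 and α ≥ 0 with ηα < 1, set W := (1 − ηα) w w^⊤ + η X, and let w' be a unit leading eigenvector of W. If w^⊤ X w ≥ (λ1(X) + λ2(X) + α)/2, then w' w'^⊤ = Π_S[W], i.e., the rank-one matrix w' w'^⊤ is the Euclidean projection of W onto the spectrahedron. -/
open Matrix MeasureTheory ProbabilityTheory BigOperators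

/-- The `k`-th largest eigenvalue (0-indexed: `eigk 0` is the largest) of a real
matrix, defined via the sorted eigenvalues of a Hermitian (= symmetric) matrix. -/
noncomputable def eigk {d : ℕ} (k : ℕ) (A : Matrix (Fin d) (Fin d) ℝ) : ℝ :=
  if h : k < d then
    (if hA : A.IsHermitian then
      (hA.eigenvalues ∘ Tuple.sort hA.eigenvalues) (Fin.rev ⟨k, h⟩) else 0)
  else 0

/-- Euclidean norm of a vector in `ℝ^d`. -/
noncomputable def vnorm {d : ℕ} (v : Fin d → ℝ) : ℝ := Real.sqrt (v ⬝ᵥ v)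

/-- Frobenius norm of a `d × d` real matrix. -/
noncomputable def frob {d : ℕ} (A : Matrix (Fin d) (Fin d) ℝ) : ℝ :=
  Real.sqrt (∑ i, ∑ j, (A i j)^2)

/-- Spectral norm (largest singular value) of a `d × d` real matrix, as the
supremum of `‖A v‖` over unit vectors `v`. -/
noncomputable def spec {d : ℕ} (A : Matrix (Fin d) (Fin d) ℝ) : ℝ :=
  sSup {r : ℝ | ∃ v : Fin d → ℝ, vnorm v = 1 ∧ r = vnorm (A.mulVec v)}

/-- The spectrahedron: positive semidefinite matrices of unit trace. -/
def Spectrahedron (d : ℕ) : Set (Matrix (Fin d) (Fin d) ℝ) :=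
  {M | M.PosSemidef ∧ M.trace = 1}

/-- `P` is the Euclidean (Frobenius-norm) projection of `W` onto the spectrahedron. -/
def IsProjSpectrahedron {d : ℕ} (W P : Matrix (Fin d) (Fin d) ℝ) : Prop :=
  P ∈ Spectrahedron d ∧ ∀ M ∈ Spectrahedron d, frob (P - W) ≤ frob (M - W)

section helpers

lemma dp_sum {d : ℕ} (v : Fin d → ℝ) (f : Fin d → (Fin d → ℝ)) :
    v ⬝ᵥ (∑ i, f i) = ∑ i, v ⬝ᵥ f i := by
  simp only [dotProduct, Finset.sum_apply, Finset.mul_sum]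
  exact Finset.sum_comm

lemma mv_sum {d : ℕ} (A : Matrix (Fin d) (Fin d) ℝ) (f : Fin d → (Fin d → ℝ)) :
    A *ᵥ (∑ i, f i) = ∑ i, A *ᵥ f i :=
  map_sum (Matrix.mulVecLin A) f Finset.univ

lemma dp_smul {d : ℕ} (v w : Fin d → ℝ) (c : ℝ) : v ⬝ᵥ (c • w) = c * (v ⬝ᵥ w) := by
  rw [dotProduct_smul]; rfl

lemma smul_dp {d : ℕ} (v w : Fin d → ℝ) (c : ℝ) : (c • v) ⬝ᵥ w = c * (v ⬝ᵥ w) := by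
  rw [smul_dotProduct]; rfl

lemma dp_self_nonneg {d : ℕ} (v : Fin d → ℝ) : 0 ≤ v ⬝ᵥ v :=
  Finset.sum_nonneg fun i _ => mul_self_nonneg _

lemma spectral_package {d : ℕ} {A : Matrix (Fin d) (Fin d) ℝ} (hA : A.IsHermitian) :
    ∃ p : Fin d → Fin d → ℝ,
      (∀ i j, p i ⬝ᵥ p j = if i = j then 1 else 0) ∧
      (∀ i, A.mulVec (p i) = hA.eigenvalues i • p i) ∧
      (∀ v : Fin d → ℝ, v = ∑ i, (p i ⬝ᵥ v) • p i) := by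
  refine ⟨fun i => ⇑(hA.eigenvectorBasis i), ?_, ?_, ?_⟩
  · intro i j
    have h := orthonormal_iff_ite.mp hA.eigenvectorBasis.orthonormal i j
    simpa [PiLp.inner_apply, dotProduct, RCLike.inner_apply, mul_comm] using h
  · exact hA.mulVec_eigenvectorBasis
  · intro v
    have h := congrArg WithLp.ofLp (hA.eigenvectorBasis.sum_repr' (WithLp.toLp 2 v : EuclideanSpace ℝ (Fin d)))
    have h' : ∑ i, ((⇑(hA.eigenvectorBasis i) : Fin d → ℝ) ⬝ᵥ v) • (⇑(hA.eigenvectorBasis i) : Fin d → ℝ) = v := by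
      conv_rhs => rw [← WithLp.ofLp_toLp 2 v, ← h]
      rw [WithLp.ofLp_sum]
      refine Finset.sum_congr rfl fun i _ => ?_
      have : ((⇑(hA.eigenvectorBasis i) : Fin d → ℝ) ⬝ᵥ v) = (inner ℝ (hA.eigenvectorBasis i) (WithLp.toLp 2 v : EuclideanSpace ℝ (Fin d)) : ℝ) := by
        simp [PiLp.inner_apply, RCLike.inner_apply, dotProduct, mul_comm]
      rw [this]
      rfl
    exact h'.symm

lemma parseval {d : ℕ} (p : Fin d → Fin d → ℝ) (v : Fin d → ℝ)
    (hv : v = ∑ i, (p i ⬝ᵥ v) • p i) :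
    v ⬝ᵥ v = ∑ i, (p i ⬝ᵥ v)^2 := by
  nth_rewrite 2 [hv]
  rw [dp_sum]
  refine Finset.sum_congr rfl fun i _ => ?_
  rw [dp_smul, dotProduct_comm]
  ring

lemma quadform {d : ℕ} (A : Matrix (Fin d) (Fin d) ℝ) (p : Fin d → Fin d → ℝ)
    (μ : Fin d → ℝ) (heig : ∀ i, A *ᵥ p i = μ i • p i) (v : Fin d → ℝ)
    (hv : v = ∑ i, (p i ⬝ᵥ v) • p i) :
    v ⬝ᵥ A *ᵥ v = ∑ i, μ i * (p i ⬝ᵥ v)^2 := by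
  nth_rewrite 2 [hv]
  rw [mv_sum]
  simp_rw [Matrix.mulVec_smul, heig]
  rw [dp_sum]
  refine Finset.sum_congr rfl fun i _ => ?_
  rw [smul_smul, dp_smul, dotProduct_comm]
  ring

lemma eigenvalue_le_eigk0 {d : ℕ} {A : Matrix (Fin d) (Fin d) ℝ} (hA : A.IsHermitian)
    (hd : 0 < d) (i : Fin d) : hA.eigenvalues i ≤ eigk 0 A := by
  rw [eigk, dif_pos hd, dif_pos hA]
  have hmono := Tuple.monotone_sort hA.eigenvalues
  have h1 : hA.eigenvalues i = (hA.eigenvalues ∘ Tuple.sort hA.eigenvalues)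
      ((Tuple.sort hA.eigenvalues)⁻¹ i) := by simp
  rw [h1]
  exact hmono (by rw [Fin.le_def]; simp [Fin.rev]; omega)

lemma eigenvalue_le_eigk1 {d : ℕ} {A : Matrix (Fin d) (Fin d) ℝ} (hA : A.IsHermitian)
    (hd : 1 < d) : ∃ i0 : Fin d, ∀ i, i ≠ i0 → hA.eigenvalues i ≤ eigk 1 A := by
  refine ⟨Tuple.sort hA.eigenvalues (Fin.rev ⟨0, by omega⟩), fun i hi => ?_⟩
  rw [eigk, dif_pos hd, dif_pos hA]
  have hmono := Tuple.monotone_sort hA.eigenvalues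
  have h1 : hA.eigenvalues i = (hA.eigenvalues ∘ Tuple.sort hA.eigenvalues)
      ((Tuple.sort hA.eigenvalues)⁻¹ i) := by simp
  rw [h1]
  apply hmono
  have h2 : (Tuple.sort hA.eigenvalues)⁻¹ i ≠ Fin.rev ⟨0, by omega⟩ := by
    intro h
    apply hi
    rw [← h]; simp
  rw [Fin.le_def]
  have h3 := ((Tuple.sort hA.eigenvalues)⁻¹ i).isLt
  have h4 : ((Tuple.sort hA.eigenvalues)⁻¹ i).val ≠ (Fin.rev (⟨0, by omega⟩ : Fin d)).val := by
    intro h; exact h2 (Fin.ext h)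
  simp [Fin.rev] at h4 ⊢
  omega

lemma eigk1_le_eigk0 {d : ℕ} {A : Matrix (Fin d) (Fin d) ℝ} (hA : A.IsHermitian)
    (hd : 1 < d) : eigk 1 A ≤ eigk 0 A := by
  rw [eigk, eigk, dif_pos hd, dif_pos (by omega : 0 < d), dif_pos hA, dif_pos hA]
  exact Tuple.monotone_sort hA.eigenvalues (by rw [Fin.le_def]; simp [Fin.rev]; omega)

lemma bessel_two {d : ℕ} (u v x : Fin d → ℝ) (hu : u ⬝ᵥ u = 1) (hv : v ⬝ᵥ v = 1)
    (huv : u ⬝ᵥ v = 0) : (u ⬝ᵥ x)^2 + (v ⬝ᵥ x)^2 ≤ x ⬝ᵥ x := by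
  set a := u ⬝ᵥ x with ha
  set b := v ⬝ᵥ x with hb
  set y := x - a • u - b • v with hy
  have h0 : (0:ℝ) ≤ y ⬝ᵥ y := dp_self_nonneg y
  have hexp : y ⬝ᵥ y = x ⬝ᵥ x - a^2 - b^2 := by
    rw [hy]
    simp only [dotProduct_sub, sub_dotProduct, dp_smul, smul_dp]
    rw [hu, hv, huv, dotProduct_comm x u, dotProduct_comm x v, dotProduct_comm v u, huv,
      ← ha, ← hb]
    ring
  linarith [hexp ▸ h0]

lemma rayleigh_le {d : ℕ} {A : Matrix (Fin d) (Fin d) ℝ} (hA : A.IsHermitian)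
    (v : Fin d → ℝ) (hv : v ⬝ᵥ v = 1) : v ⬝ᵥ A *ᵥ v ≤ eigk 0 A := by
  have hd : 0 < d := by
    rcases Nat.eq_zero_or_pos d with h|h
    · subst h; simp [dotProduct] at hv
    · exact h
  obtain ⟨p, ho, he, hc⟩ := spectral_package hA
  rw [quadform A p hA.eigenvalues he v (hc v)]
  have hp : ∑ i, (p i ⬝ᵥ v)^2 = 1 := by rw [← parseval p v (hc v), hv]
  calc ∑ i, hA.eigenvalues i * (p i ⬝ᵥ v)^2
      ≤ ∑ i, eigk 0 A * (p i ⬝ᵥ v)^2 :=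
        Finset.sum_le_sum fun i _ =>
          mul_le_mul_of_nonneg_right (eigenvalue_le_eigk0 hA hd i) (sq_nonneg _)
    _ = eigk 0 A := by rw [← Finset.mul_sum, hp, mul_one]

lemma kyfan2 {d : ℕ} {A : Matrix (Fin d) (Fin d) ℝ} (hA : A.IsHermitian) (hd : 1 < d)
    (u v : Fin d → ℝ) (hu : u ⬝ᵥ u = 1) (hv : v ⬝ᵥ v = 1) (huv : u ⬝ᵥ v = 0) :
    u ⬝ᵥ A *ᵥ u + v ⬝ᵥ A *ᵥ v ≤ eigk 0 A + eigk 1 A := by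
  obtain ⟨p, ho, he, hc⟩ := spectral_package hA
  obtain ⟨i0, hi0⟩ := eigenvalue_le_eigk1 hA hd
  set μ := hA.eigenvalues with hμ
  set c : Fin d → ℝ := fun i => (p i ⬝ᵥ u)^2 + (p i ⬝ᵥ v)^2 with hcdef
  have hcnn : ∀ i, 0 ≤ c i := fun i => by positivity
  have hc1 : ∀ i, c i ≤ 1 := by
    intro i
    have := bessel_two u v (p i) hu hv huv
    have hcom : ∀ z : Fin d → ℝ, z ⬝ᵥ p i = p i ⬝ᵥ z := fun z => dotProduct_comm z (p i)
    rw [hcom u, hcom v] at this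
    calc c i = (p i ⬝ᵥ u)^2 + (p i ⬝ᵥ v)^2 := rfl
      _ ≤ p i ⬝ᵥ p i := this
      _ = 1 := by rw [ho i i]; simp
  have hsum : ∑ i, c i = 2 := by
    have h1 := parseval p u (hc u)
    have h2 := parseval p v (hc v)
    simp only [hcdef, Finset.sum_add_distrib]
    rw [← h1, ← h2, hu, hv]; norm_num
  have hquad : u ⬝ᵥ A *ᵥ u + v ⬝ᵥ A *ᵥ v = ∑ i, μ i * c i := by
    rw [quadform A p μ he u (hc u), quadform A p μ he v (hc v)]
    simp only [hcdef, mul_add, Finset.sum_add_distrib]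
  rw [hquad]
  have hsplit : ∑ i, μ i * c i = μ i0 * c i0 + ∑ i ∈ Finset.univ.erase i0, μ i * c i :=
    (Finset.add_sum_erase _ _ (Finset.mem_univ i0)).symm
  have hsum' : ∑ i ∈ Finset.univ.erase i0, c i = 2 - c i0 := by
    have := Finset.add_sum_erase Finset.univ c (Finset.mem_univ i0)
    linarith [hsum ▸ this]
  have h2 : ∑ i ∈ Finset.univ.erase i0, μ i * c i ≤ eigk 1 A * (2 - c i0) := by
    rw [← hsum', Finset.mul_sum]
    refine Finset.sum_le_sum fun i hi => ?_
    exact mul_le_mul_of_nonneg_right (hi0 i (Finset.ne_of_mem_erase hi)) (hcnn i)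
  have h1 : μ i0 * c i0 ≤ eigk 0 A * c i0 :=
    mul_le_mul_of_nonneg_right (eigenvalue_le_eigk0 hA (by omega) i0) (hcnn i0)
  have h3 : eigk 1 A ≤ eigk 0 A := eigk1_le_eigk0 hA hd
  nlinarith [hc1 i0, hcnn i0]

lemma vmv_mulVec {d : ℕ} (a b x : Fin d → ℝ) : (vecMulVec a b) *ᵥ x = (b ⬝ᵥ x) • a := by
  ext i
  simp only [mulVec, vecMulVec_apply, dotProduct, Pi.smul_apply, smul_eq_mul, Finset.sum_mul]
  refine Finset.sum_congr rfl fun j _ => by ring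

lemma vmv_hermitian {d : ℕ} (a : Fin d → ℝ) : (vecMulVec a a).IsHermitian := by
  unfold Matrix.IsHermitian
  ext i j
  simp [vecMulVec_apply, conjTranspose_apply, mul_comm]

lemma herm_smul {d : ℕ} (c : ℝ) {A : Matrix (Fin d) (Fin d) ℝ} (hA : A.IsHermitian) :
    (c • A).IsHermitian := by
  unfold Matrix.IsHermitian at *
  ext i j
  have := congrFun (congrFun hA i) j
  simp only [conjTranspose_apply, star_trivial, Matrix.smul_apply, smul_eq_mul] at this ⊢
  rw [this]

lemma dp_mv_symm {d : ℕ} {A : Matrix (Fin d) (Fin d) ℝ} (hA : A.IsHermitian)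
    (a b : Fin d → ℝ) : a ⬝ᵥ (A *ᵥ b) = b ⬝ᵥ (A *ᵥ a) := by
  have hAT : Aᵀ = A := by
    ext i j
    simpa using congrFun (congrFun hA i) j
  rw [dotProduct_mulVec, ← Matrix.mulVec_transpose, hAT, dotProduct_comm]

lemma I2_vmv {d : ℕ} (B : Matrix (Fin d) (Fin d) ℝ) (a b : Fin d → ℝ) :
    ∑ i, ∑ j, (vecMulVec a b) i j * B i j = a ⬝ᵥ B *ᵥ b := by
  simp only [vecMulVec_apply, dotProduct, mulVec, Finset.mul_sum]
  refine Finset.sum_congr rfl fun i _ => Finset.sum_congr rfl fun j _ => by ring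

lemma sum3_swap {d : ℕ} (f : Fin d → Fin d → Fin d → ℝ) :
    ∑ i, ∑ j, ∑ k, f i j k = ∑ k, ∑ i, ∑ j, f i j k :=
  calc ∑ i, ∑ j, ∑ k, f i j k = ∑ i, ∑ k, ∑ j, f i j k :=
        Finset.sum_congr rfl fun _ _ => Finset.sum_comm
    _ = ∑ k, ∑ i, ∑ j, f i j k := Finset.sum_comm

lemma two_orthonormal_dim {d : ℕ} (u v : Fin d → ℝ) (hu : u ⬝ᵥ u = 1)
    (hv : v ⬝ᵥ v = 1) (huv : u ⬝ᵥ v = 0) : 1 < d := by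
  by_contra h
  push_neg at h
  interval_cases d
  · simp [dotProduct] at hu
  · have h1 : u 0 * u 0 = 1 := by simpa [dotProduct, Fin.sum_univ_one] using hu
    have h2 : v 0 * v 0 = 1 := by simpa [dotProduct, Fin.sum_univ_one] using hv
    have h3 : u 0 * v 0 = 0 := by simpa [dotProduct, Fin.sum_univ_one] using huv
    nlinarith

lemma inner2_nonneg {d : ℕ} {A M : Matrix (Fin d) (Fin d) ℝ} (hA : A.PosSemidef)
    (hM : M.PosSemidef) : 0 ≤ ∑ i, ∑ j, A i j * M i j := by
  obtain ⟨B, rfl⟩ : ∃ B : Matrix (Fin d) (Fin d) ℝ, M = Bᴴ * B := by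
    open scoped MatrixOrder in exact CStarAlgebra.nonneg_iff_eq_star_mul_self.mp hM.nonneg
  have key : ∀ k, (0:ℝ) ≤ ∑ i, ∑ j, A i j * (B k i * B k j) := by
    intro k
    have h := hA.dotProduct_mulVec_nonneg (fun i => B k i)
    simp only [star_trivial, dotProduct, mulVec, Finset.mul_sum] at h
    calc (0:ℝ) ≤ ∑ i, ∑ j, B k i * (A i j * B k j) := h
      _ = ∑ i, ∑ j, A i j * (B k i * B k j) := by
          exact Finset.sum_congr rfl fun i _ => Finset.sum_congr rfl fun j _ => by ring
  have heq : ∑ i, ∑ j, A i j * (Bᴴ * B) i j = ∑ k, ∑ i, ∑ j, A i j * (B k i * B k j) := by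
    calc ∑ i, ∑ j, A i j * (Bᴴ * B) i j
        = ∑ i, ∑ j, ∑ k, A i j * (B k i * B k j) := by
          refine Finset.sum_congr rfl fun i _ => Finset.sum_congr rfl fun j _ => ?_
          rw [Matrix.mul_apply, Finset.mul_sum]
          refine Finset.sum_congr rfl fun k _ => ?_
          simp only [conjTranspose_apply, star_trivial]
      _ = ∑ k, ∑ i, ∑ j, A i j * (B k i * B k j) := sum3_swap _
  rw [heq]
  exact Finset.sum_nonneg fun k _ => key k

end helpers

/-- **Lemma 3 (rank-one projection condition).** -/
theorem rank_one_projection_condition {d : ℕ} (w : Fin d → ℝ) (hw : vnorm w = 1)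
    (X : Matrix (Fin d) (Fin d) ℝ) (hX : X.PosSemidef)
    (η α : ℝ) (hη : 0 < η) (hα : 0 ≤ α) (hηα : η * α < 1)
    (W : Matrix (Fin d) (Fin d) ℝ)
    (hW : W = (1 - η * α) • vecMulVec w w + η • X)
    (w' : Fin d → ℝ) (hw' : vnorm w' = 1)
    (hEig : W.mulVec w' = eigk 0 W • w')
    (hCond : w ⬝ᵥ X.mulVec w ≥ (eigk 0 X + eigk 1 X + α) / 2) :
    IsProjSpectrahedron W (vecMulVec w' w') := by
  have hw1 : w ⬝ᵥ w = 1 := by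
    have h := hw; unfold vnorm at h
    nlinarith [Real.sq_sqrt (dp_self_nonneg w), h]
  have hw'1 : w' ⬝ᵥ w' = 1 := by
    have h := hw'; unfold vnorm at h
    nlinarith [Real.sq_sqrt (dp_self_nonneg w'), h]
  have hXh : X.IsHermitian := hX.1
  have hWh : W.IsHermitian := by
    rw [hW]
    exact (herm_smul _ (vmv_hermitian w)).add (herm_smul _ hXh)
  set t := eigk 0 W with ht
  set P := vecMulVec w' w' with hPdef
  have hPmv : ∀ x, P *ᵥ x = (w' ⬝ᵥ x) • w' := fun x => vmv_mulVec w' w' x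
  have htW : w' ⬝ᵥ W *ᵥ w' = t := by rw [hEig, dp_smul, hw'1, mul_one]
  have hquadW : ∀ x : Fin d → ℝ,
      x ⬝ᵥ W *ᵥ x = (1 - η*α) * (w ⬝ᵥ x)^2 + η * (x ⬝ᵥ X *ᵥ x) := by
    intro x
    rw [hW, Matrix.add_mulVec, Matrix.smul_mulVec, Matrix.smul_mulVec,
      dotProduct_add, dp_smul, dp_smul, vmv_mulVec, dp_smul, dotProduct_comm x w]
    ring
  have hRay : 1 - η*α + η * (w ⬝ᵥ X *ᵥ w) ≤ t := by
    have h := rayleigh_le hWh w hw1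
    rw [hquadW w, hw1] at h
    calc 1 - η*α + η * (w ⬝ᵥ X *ᵥ w) = (1 - η*α) * 1^2 + η * (w ⬝ᵥ X *ᵥ w) := by ring
      _ ≤ t := h
  -- main inequality for unit vectors orthogonal to w'
  have hmain : ∀ u : Fin d → ℝ, u ⬝ᵥ u = 1 → w' ⬝ᵥ u = 0 → u ⬝ᵥ W *ᵥ u ≤ t - 1 := by
    intro u hu huw'
    have huw'2 : u ⬝ᵥ w' = 0 := by rw [dotProduct_comm]; exact huw'
    have hd2 : 1 < d := two_orthonormal_dim u w' hu hw'1 huw'2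
    have hky := kyfan2 hXh hd2 u w' hu hw'1 huw'2
    have hbes := bessel_two u w' w hu hw'1 huw'2
    have hCond' : eigk 0 X + eigk 1 X ≤ 2 * (w ⬝ᵥ X *ᵥ w) - α := by
      linarith [hCond]
    have h1 := hquadW u
    have h2 := hquadW w'
    rw [htW] at h2
    have hwu : (w ⬝ᵥ u)^2 = (u ⬝ᵥ w)^2 := by rw [dotProduct_comm]
    have hww' : (w ⬝ᵥ w')^2 = (w' ⬝ᵥ w)^2 := by rw [dotProduct_comm]
    have h1ηα : (0:ℝ) ≤ 1 - η*α := by linarith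
    have hb : (1 - η*α) * ((u ⬝ᵥ w)^2 + (w' ⬝ᵥ w)^2) ≤ (1 - η*α) * 1 :=
      mul_le_mul_of_nonneg_left (by linarith) h1ηα
    have hk : η * (u ⬝ᵥ X *ᵥ u + w' ⬝ᵥ X *ᵥ w') ≤ η * (2 * (w ⬝ᵥ X *ᵥ w) - α) :=
      mul_le_mul_of_nonneg_left (by linarith) (le_of_lt hη)
    nlinarith [h1, h2, hb, hk, hRay, hwu, hww']
  -- positive semidefiniteness of the certificate matrix
  have hApsd : ((t - 1) • (1 : Matrix (Fin d) (Fin d) ℝ) - W + P).PosSemidef := by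
    refine Matrix.PosSemidef.of_dotProduct_mulVec_nonneg ?_ ?_
    · exact ((herm_smul _ Matrix.isHermitian_one).sub hWh).add (vmv_hermitian w')
    · intro x
      have hstar : (star x : Fin d → ℝ) = x := by
        funext i; simp
      rw [hstar]
      set c := w' ⬝ᵥ x with hc
      set u := x - c • w' with hudef
      have hx : x = u + c • w' := by rw [hudef]; abel
      have huw' : w' ⬝ᵥ u = 0 := by
        rw [hudef, dotProduct_sub, dp_smul, hw'1, ← hc]; ring
      have huw'2 : u ⬝ᵥ w' = 0 := by rw [dotProduct_comm]; exact huw'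
      have hxx : x ⬝ᵥ x = u ⬝ᵥ u + c^2 := by
        rw [hx]
        simp only [dotProduct_add, add_dotProduct, dp_smul, smul_dp, huw'2, huw', hw'1]
        ring
      have hWu : w' ⬝ᵥ W *ᵥ u = 0 := by
        rw [dp_mv_symm hWh w' u, hEig, dp_smul, huw'2, mul_zero]
      have hxWx : x ⬝ᵥ W *ᵥ x = u ⬝ᵥ W *ᵥ u + c^2 * t := by
        rw [hx]
        rw [Matrix.mulVec_add, Matrix.mulVec_smul, hEig]
        simp only [dotProduct_add, add_dotProduct, dp_smul, smul_dp, hWu, huw'2, huw',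
          hw'1, smul_smul, mul_zero, zero_mul, add_zero, zero_add, mul_one]
        ring
      have hPx : x ⬝ᵥ P *ᵥ x = c^2 := by
        rw [hPmv, dp_smul, dotProduct_comm x w', ← hc]
        ring
      have hlhs : x ⬝ᵥ (((t-1) • (1 : Matrix (Fin d) (Fin d) ℝ) - W + P) *ᵥ x)
          = (t-1) * (x ⬝ᵥ x) - x ⬝ᵥ W *ᵥ x + x ⬝ᵥ P *ᵥ x := by
        rw [Matrix.add_mulVec, Matrix.sub_mulVec, Matrix.smul_mulVec,
          Matrix.one_mulVec, dotProduct_add, dotProduct_sub, dp_smul]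
      rw [hlhs, hxx, hxWx, hPx]
      have hgoal : u ⬝ᵥ W *ᵥ u ≤ (t-1) * (u ⬝ᵥ u) := by
        rcases eq_or_ne (u ⬝ᵥ u) 0 with h0 | hne
        · have hu0 : u = 0 := dotProduct_self_eq_zero.mp h0
          simp [hu0]
        · have hpos : 0 < u ⬝ᵥ u := lt_of_le_of_ne (dp_self_nonneg u) (Ne.symm hne)
          set r := Real.sqrt (u ⬝ᵥ u) with hr
          have hrpos : 0 < r := Real.sqrt_pos.mpr hpos
          have hrr : r * r = u ⬝ᵥ u := Real.mul_self_sqrt (le_of_lt hpos)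
          set v := r⁻¹ • u with hv
          have hvv : v ⬝ᵥ v = 1 := by
            rw [hv, smul_dp, dp_smul, ← hrr]
            field_simp
          have hvw' : w' ⬝ᵥ v = 0 := by rw [hv, dp_smul, huw', mul_zero]
          have hm := hmain v hvv hvw'
          have hvWv : v ⬝ᵥ W *ᵥ v = r⁻¹ * (r⁻¹ * (u ⬝ᵥ W *ᵥ u)) := by
            rw [hv, Matrix.mulVec_smul, dp_smul, smul_dp]
          rw [hvWv] at hm
          have h2 : u ⬝ᵥ W *ᵥ u ≤ (t - 1) * (r * r) := by
            have hrne : r ≠ 0 := ne_of_gt hrpos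
            have := mul_le_mul_of_nonneg_left hm (le_of_lt (mul_pos hrpos hrpos))
            calc u ⬝ᵥ W *ᵥ u = (r * r) * (r⁻¹ * (r⁻¹ * (u ⬝ᵥ W *ᵥ u))) := by
                  field_simp
              _ ≤ (r * r) * (t - 1) := this
              _ = (t - 1) * (r * r) := by ring
          rw [hrr] at h2
          exact h2
      nlinarith [hgoal]
  -- membership of P in the spectrahedron
  have hPmem : P ∈ Spectrahedron d := by
    constructor
    · refine Matrix.PosSemidef.of_dotProduct_mulVec_nonneg (vmv_hermitian w') fun x => ?_
      have hstar : (star x : Fin d → ℝ) = x := by funext i; simp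
      rw [hstar, hPmv, dp_smul, dotProduct_comm x w']
      exact mul_self_nonneg _
    · show P.trace = 1
      rw [Matrix.trace]
      simp only [Matrix.diag, hPdef, vecMulVec_apply]
      exact hw'1
  refine ⟨hPmem, ?_⟩
  intro M hM
  obtain ⟨hMpsd, hMtr⟩ := hM
  have hMtr' : ∑ i, M i i = 1 := by
    have := hMtr
    rw [Matrix.trace] at this
    simpa [Matrix.diag] using this
  have hinner := inner2_nonneg hApsd hMpsd
  have hIid : ∑ i, ∑ j, ((t-1) • (1 : Matrix (Fin d) (Fin d) ℝ)) i j * M i j = t - 1 := by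
    have hterm : ∀ i : Fin d, ∑ j, ((t-1) • (1 : Matrix (Fin d) (Fin d) ℝ)) i j * M i j
        = (t-1) * M i i := by
      intro i
      rw [Finset.sum_eq_single i]
      · simp [Matrix.one_apply]
      · intro j _ hji
        simp [Matrix.one_apply, Ne.symm hji]
      · intro h; exact absurd (Finset.mem_univ i) h
    rw [Finset.sum_congr rfl fun i _ => hterm i, ← Finset.mul_sum, hMtr', mul_one]
  have hIPM : ∑ i, ∑ j, P i j * M i j = w' ⬝ᵥ M *ᵥ w' := I2_vmv M w' w'
  have hsplit : ∑ i, ∑ j, ((t-1) • (1 : Matrix (Fin d) (Fin d) ℝ) - W + P) i j * M i j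
      = (∑ i, ∑ j, ((t-1) • (1 : Matrix (Fin d) (Fin d) ℝ)) i j * M i j)
        - (∑ i, ∑ j, W i j * M i j) + ∑ i, ∑ j, P i j * M i j := by
    simp only [Matrix.add_apply, Matrix.sub_apply, sub_mul, add_mul,
      Finset.sum_add_distrib, Finset.sum_sub_distrib]
  have hWM : ∑ i, ∑ j, W i j * M i j ≤ t - 1 + w' ⬝ᵥ M *ᵥ w' := by
    rw [hsplit, hIid, hIPM] at hinner
    linarith
  have hPP : ∑ i, ∑ j, P i j * P i j = 1 := by
    have h := I2_vmv P w' w'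
    rw [hPmv, dp_smul, hw'1] at h
    rw [hPdef] at h ⊢
    rw [h]
    ring
  have hPW : ∑ i, ∑ j, P i j * W i j = t := by
    have h := I2_vmv W w' w'
    rw [hPdef]
    rw [h, htW]
  have key : 0 ≤ ∑ i, ∑ j, (M - P) i j * (P - W) i j := by
    have e : ∑ i, ∑ j, (M - P) i j * (P - W) i j
        = (∑ i, ∑ j, P i j * M i j) - (∑ i, ∑ j, W i j * M i j)
          - (∑ i, ∑ j, P i j * P i j) + (∑ i, ∑ j, P i j * W i j) :=
      calc ∑ i, ∑ j, (M - P) i j * (P - W) i j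
          = ∑ i, ∑ j, (P i j * M i j - W i j * M i j - P i j * P i j + P i j * W i j) :=
            Finset.sum_congr rfl fun i _ => Finset.sum_congr rfl fun j _ => by
              simp only [Matrix.sub_apply]; ring
        _ = _ := by
            simp only [Finset.sum_add_distrib, Finset.sum_sub_distrib]
    rw [e, hIPM, hPP, hPW]
    linarith [hWM]
  show frob (P - W) ≤ frob (M - W)
  unfold frob
  apply Real.sqrt_le_sqrt
  have hexp : ∑ i, ∑ j, ((M - W) i j)^2
      = (∑ i, ∑ j, ((M - P) i j)^2)
        + 2 * (∑ i, ∑ j, (M - P) i j * (P - W) i j)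
        + ∑ i, ∑ j, ((P - W) i j)^2 :=
    calc ∑ i, ∑ j, ((M - W) i j)^2
        = ∑ i, ∑ j, (((M - P) i j)^2 + 2 * ((M - P) i j * (P - W) i j) + ((P - W) i j)^2) :=
          Finset.sum_congr rfl fun i _ => Finset.sum_congr rfl fun j _ => by
            simp only [Matrix.sub_apply]; ring
      _ = _ := by
          simp only [Finset.sum_add_distrib, ← Finset.mul_sum]
  have hsq : 0 ≤ ∑ i, ∑ j, ((M - P) i j)^2 :=
    Finset.sum_nonneg fun i _ => Finset.sum_nonneg fun j _ => sq_nonneg _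
  linarith [hexp, key, hsq]
end

section
/- (Rank-one projection via eigenvalue gap; sub-claim in the proof of Lemma 3.) Let W ∈ R^{d×d} be a symmetric matrix with λ1(W) ≥ 1 + λ2(W), and let w' be a unit leading eigenvector of W. Then Π_S[W] = w' w'^⊤, i.e., the Euclidean projection of W onto the spectrahedron equals the rank-one matrix w' w'^⊤. -/
open Matrix MeasureTheory ProbabilityTheory BigOperators

/-- Core scalar inequality: if the leading weight direction has the dominant
eigenvalue and all other eigenvalues are at least `1` below `l1`, then the
simplex point `e_{i0}` minimizes `∑ nᵢ² - 2 ∑ λᵢ nᵢ`. -/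
lemma key_ineq {d : ℕ} (i0 : Fin d) (n lam : Fin d → ℝ) (l1 : ℝ)
    (hn : ∀ i, 0 ≤ n i) (hsum : ∑ i, n i = 1)
    (h0 : lam i0 ≤ l1) (hgap : ∀ i, i ≠ i0 → lam i ≤ l1 - 1) :
    1 - 2 * l1 ≤ (∑ i, (n i)^2) - 2 * ∑ i, lam i * n i := by
  have hrest : ∑ i ∈ Finset.univ.erase i0, n i = 1 - n i0 := by
    rw [Finset.sum_erase_eq_sub (Finset.mem_univ i0), hsum]
  have h1 : 1 - n i0 ≤ ∑ i, (l1 - lam i) * n i := by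
    rw [← Finset.add_sum_erase _ _ (Finset.mem_univ i0)]
    have hA : 0 ≤ (l1 - lam i0) * n i0 := mul_nonneg (by linarith) (hn i0)
    have hB : ∑ i ∈ Finset.univ.erase i0, n i
        ≤ ∑ i ∈ Finset.univ.erase i0, (l1 - lam i) * n i := by
      apply Finset.sum_le_sum
      intro i hi
      have := hgap i (Finset.ne_of_mem_erase hi)
      nlinarith [hn i]
    linarith
  have h2 : (n i0)^2 ≤ ∑ i, (n i)^2 :=
    Finset.single_le_sum (f := fun i => (n i)^2) (fun i _ => sq_nonneg _) (Finset.mem_univ i0)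
  have h3 : ∑ i, (l1 - lam i) * n i = l1 - ∑ i, lam i * n i := by
    simp_rw [sub_mul, Finset.sum_sub_distrib, ← Finset.mul_sum, hsum, mul_one]
  nlinarith [sq_nonneg (n i0 - 1)]

/-- Eigenvalue gap gives: a unique top index `i0` with all other eigenvalues
at least `1` below the top one. -/
lemma eig_gap_structure {d : ℕ} (W : Matrix (Fin d) (Fin d) ℝ) (hW : W.IsHermitian)
    (hd : 0 < d) (hGap : eigk 0 W ≥ 1 + eigk 1 W) :
    ∃ i0 : Fin d, hW.eigenvalues i0 = eigk 0 W ∧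
      ∀ i, i ≠ i0 → hW.eigenvalues i ≤ eigk 0 W - 1 := by
  set σ := Tuple.sort hW.eigenvalues with hσ
  refine ⟨σ (Fin.rev ⟨0, hd⟩), ?_, ?_⟩
  · rw [eigk, dif_pos hd, dif_pos hW]; rfl
  · intro i hi
    by_cases hd2 : 2 ≤ d
    · have h1d : 1 < d := hd2
      have hj : σ.symm i ≠ Fin.rev ⟨0, hd⟩ := by
        intro h; apply hi; rw [← h]; simp
      have hjle : σ.symm i ≤ Fin.rev ⟨1, h1d⟩ := by
        have hv : (Fin.rev (⟨0, hd⟩ : Fin d)).val = d - 1 := by simp [Fin.rev]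
        have hv1 : (Fin.rev (⟨1, h1d⟩ : Fin d)).val = d - 2 := by simp [Fin.rev]
        have : (σ.symm i).val ≠ d - 1 := fun h => hj (Fin.ext (by rw [h, hv]))
        have h2 : (σ.symm i).val < d := (σ.symm i).isLt
        rw [Fin.le_def, hv1]
        omega
      have hmono := Tuple.monotone_sort hW.eigenvalues hjle
      have he1 : eigk 1 W = (hW.eigenvalues ∘ σ) (Fin.rev ⟨1, h1d⟩) := by
        rw [eigk, dif_pos h1d, dif_pos hW]
      have hii : hW.eigenvalues i = (hW.eigenvalues ∘ σ) (σ.symm i) := by simp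
      rw [hii]
      calc (hW.eigenvalues ∘ σ) (σ.symm i) ≤ (hW.eigenvalues ∘ σ) (Fin.rev ⟨1, h1d⟩) := hmono
        _ = eigk 1 W := he1.symm
        _ ≤ eigk 0 W - 1 := by linarith
    · have hd1 : d = 1 := by omega
      subst hd1
      exact absurd (Subsingleton.elim i _) hi

lemma sum_sq_eq_trace {d : ℕ} (A : Matrix (Fin d) (Fin d) ℝ) :
    ∑ i, ∑ j, (A i j)^2 = (Aᵀ * A).trace := by
  simp [Matrix.trace, Matrix.diag, Matrix.mul_apply, sq]
  exact Finset.sum_comm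

lemma inner_eq_trace {d : ℕ} (A B : Matrix (Fin d) (Fin d) ℝ) :
    ∑ i, ∑ j, A i j * B i j = (Aᵀ * B).trace := by
  simp [Matrix.trace, Matrix.diag, Matrix.mul_apply]
  exact Finset.sum_comm

/-- **Rank-one projection via eigenvalue gap** (sub-claim in the proof of Lemma 3). -/
theorem rank_one_projection_of_eigenvalue_gap {d : ℕ}
    (W : Matrix (Fin d) (Fin d) ℝ) (hWsymm : W.IsSymm)
    (hGap : eigk 0 W ≥ 1 + eigk 1 W)
    (w' : Fin d → ℝ) (hw' : vnorm w' = 1)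
    (hEig : W.mulVec w' = eigk 0 W • w') :
    IsProjSpectrahedron W (vecMulVec w' w') := by
  classical
  have hW : W.IsHermitian := by
    rwa [Matrix.IsHermitian, Matrix.conjTranspose_eq_transpose_of_trivial]
  have hww : w' ⬝ᵥ w' = 1 := Real.sqrt_eq_one.mp hw'
  have hd : 0 < d := by
    rcases Nat.eq_zero_or_pos d with h | h
    · subst h; simp [dotProduct] at hww
    · exact h
  set l1 := eigk 0 W with hl1
  -- membership
  have hPmem : vecMulVec w' w' ∈ Spectrahedron d := by
    constructor
    · rw [Matrix.posSemidef_iff_dotProduct_mulVec]; constructor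
      · rw [Matrix.IsHermitian, Matrix.conjTranspose_eq_transpose_of_trivial]
        ext i j
        simp [Matrix.vecMulVec_apply, mul_comm]
      · intro x
        have hx : star x ⬝ᵥ (vecMulVec w' w') *ᵥ x = (w' ⬝ᵥ x) * (w' ⬝ᵥ x) := by
          simp [dotProduct, Matrix.mulVec, Matrix.vecMulVec_apply, Finset.mul_sum,
            Finset.sum_mul]
          congr 1; ext i; congr 1; ext j; ring
        rw [hx]
        exact mul_self_nonneg _
    · simpa [Matrix.trace, Matrix.diag, Matrix.vecMulVec_apply, dotProduct] using hww
  refine ⟨hPmem, ?_⟩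
  rintro M ⟨hMpsd, hMtr⟩
  -- reduce to sum-of-squares inequality
  rw [frob, frob]
  apply Real.sqrt_le_sqrt
  have expand : ∀ A : Matrix (Fin d) (Fin d) ℝ,
      ∑ i, ∑ j, ((A - W) i j)^2
        = (∑ i, ∑ j, (A i j)^2) - 2*(∑ i, ∑ j, A i j * W i j) + ∑ i, ∑ j, (W i j)^2 := by
    intro A
    have h : ∀ i j, ((A - W) i j)^2 = (A i j)^2 - 2*(A i j * W i j) + (W i j)^2 := by
      intro i j; simp [Matrix.sub_apply]; ring
    simp_rw [h, Finset.sum_add_distrib, Finset.sum_sub_distrib, ← Finset.mul_sum]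
  rw [expand, expand]
  -- compute the two quantities for P = w' w'ᵀ
  have hFP : ∑ i, ∑ j, (vecMulVec w' w' i j)^2 = 1 := by
    have h : ∑ i, ∑ j, (vecMulVec w' w' i j)^2 = (∑ i, w' i * w' i) * (∑ j, w' j * w' j) := by
      rw [Finset.sum_mul_sum]
      refine Finset.sum_congr rfl fun i _ => Finset.sum_congr rfl fun j _ => ?_
      simp [Matrix.vecMulVec_apply]; ring
    rw [h]
    simp only [dotProduct] at hww
    rw [hww]; norm_num
  have hipP : ∑ i, ∑ j, (vecMulVec w' w' i j) * W i j = l1 := by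
    have h1 : ∑ i, ∑ j, (vecMulVec w' w' i j) * W i j = w' ⬝ᵥ (W *ᵥ w') := by
      simp only [dotProduct, Matrix.mulVec, Matrix.vecMulVec_apply]
      refine Finset.sum_congr rfl fun i _ => ?_
      rw [Finset.mul_sum]
      exact Finset.sum_congr rfl fun j _ => by ring
    rw [h1, hEig, dotProduct_smul]
    simp [hww]
  rw [hFP, hipP]
  -- now the core inequality via the eigenbasis of W
  obtain ⟨i0, hi0, hgap'⟩ := eig_gap_structure W hW hd hGap
  set U : Matrix (Fin d) (Fin d) ℝ := (hW.eigenvectorUnitary : Matrix (Fin d) (Fin d) ℝ)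
    with hU
  have hsUU : star U * U = 1 := hW.eigenvectorUnitary.2.1
  have hUsU : U * star U = 1 := hW.eigenvectorUnitary.2.2
  have hspec : W = U * diagonal hW.eigenvalues * star U := by
    have := hW.spectral_theorem
    simpa [RCLike.ofReal_real_eq_id] using this
  set N : Matrix (Fin d) (Fin d) ℝ := star U * M * U with hN
  have hNpsd : N.PosSemidef := by
    rw [hN, Matrix.star_eq_conjTranspose]
    exact hMpsd.conjTranspose_mul_mul_same U
  have hNdiag : ∀ i, 0 ≤ N i i := by
    intro i
    have := hNpsd.dotProduct_mulVec_nonneg (Pi.single i 1)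
    simpa [Matrix.mulVec, dotProduct, Pi.single_apply] using this
  have hNtr : ∑ i, N i i = 1 := by
    have h1 : N.trace = M.trace := by
      rw [hN, Matrix.trace_mul_cycle, hUsU, one_mul]
    simpa [Matrix.trace, Matrix.diag] using h1.trans hMtr
  have hMsymm : Mᵀ = M := by
    rw [← Matrix.conjTranspose_eq_transpose_of_trivial]; exact hMpsd.isHermitian
  have hNsymm : Nᵀ = N := by
    rw [← Matrix.conjTranspose_eq_transpose_of_trivial]; exact hNpsd.isHermitian
  -- ip M W = ∑ λᵢ Nᵢᵢ
  have hMW : ∑ i, ∑ j, M i j * W i j = ∑ i, hW.eigenvalues i * N i i := by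
    rw [inner_eq_trace, hMsymm]
    conv_lhs => rw [hspec]
    simp only [← mul_assoc]
    rw [Matrix.trace_mul_comm]
    simp only [← mul_assoc]
    rw [← hN]
    simp [Matrix.trace, Matrix.diag, Matrix.mul_diagonal, mul_comm]
  -- F M = F N
  have hFM : ∑ i, ∑ j, (M i j)^2 = ∑ i, ∑ j, (N i j)^2 := by
    rw [sum_sq_eq_trace, sum_sq_eq_trace, hMsymm, hNsymm, hN]
    have h5 : (star U * M * U) * (star U * M * U)
        = star U * M * (U * star U) * (M * U) := by
      simp only [mul_assoc]
    rw [h5, hUsU, mul_one, Matrix.trace_mul_cycle, mul_assoc M U (star U), hUsU, mul_one]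
  -- diagonal entries dominate
  have hNF : ∑ i, (N i i)^2 ≤ ∑ i, ∑ j, (N i j)^2 :=
    Finset.sum_le_sum fun i _ =>
      Finset.single_le_sum (f := fun j => (N i j)^2) (fun j _ => sq_nonneg _)
        (Finset.mem_univ i)
  have hkey := key_ineq i0 (fun i => N i i) hW.eigenvalues l1 hNdiag hNtr
    (le_of_eq hi0) hgap'
  linarith
end

section
/- (Lemma 5, correlation increase, deterministic form.) Let Q ∈ R^{d×d} be symmetric positive semidefinite with unit leading eigenvector x and eigengap δ(Q) := λ1(Q) − λ2(Q). Let V_mat = Σ_{i=1}^ℓ v_i v_i^⊤ where ‖v_i‖ ≤ V for all i, let D ∈ R^{d×d} be symmetric, and set X := ℓ·Q + V_mat + D. Let ŵ be a unit vector with (x^⊤ ŵ)^2 ≥ 1/2, let η > 0 and α ≥ 0 with ηα < 1, set W := (1 − ηα) ŵ ŵ^⊤ + η X, suppose λ1(W) > λ2(W), and let w' be a unit leading eigenvector of W. Then (x^⊤ w')^2 ≥ (x^⊤ ŵ)^2 + ηℓ · [(1 − (x^⊤ ŵ)^2)·δ(Q) − (x^⊤ ŵ)^2 · V^2 − 4ℓ^{-1}‖D‖]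 / (λ1(W) − λ2(W)). -/
open Matrix MeasureTheory ProbabilityTheory BigOperators

lemma dot_self_nonneg' {d : ℕ} (a : Fin d → ℝ) : 0 ≤ a ⬝ᵥ a :=
  Finset.sum_nonneg fun i _ => mul_self_nonneg _

lemma vnorm_nonneg' {d : ℕ} (a : Fin d → ℝ) : 0 ≤ vnorm a := Real.sqrt_nonneg _

lemma vnorm_sq {d : ℕ} (a : Fin d → ℝ) : (vnorm a)^2 = a ⬝ᵥ a :=
  Real.sq_sqrt (dot_self_nonneg' a)

lemma dot_self_of_unit {d : ℕ} {a : Fin d → ℝ} (h : vnorm a = 1) : a ⬝ᵥ a = 1 := by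
  rw [← vnorm_sq, h, one_pow]

lemma dot_eq_inner {d : ℕ} (a b : Fin d → ℝ) :
    a ⬝ᵥ b = @inner ℝ (EuclideanSpace ℝ (Fin d)) _
      ((WithLp.equiv 2 (Fin d → ℝ)).symm a) ((WithLp.equiv 2 (Fin d → ℝ)).symm b) := by
  simp [dotProduct, PiLp.inner_apply, RCLike.inner_apply, mul_comm]

lemma dot_sq_le {d : ℕ} (a b : Fin d → ℝ) : (a ⬝ᵥ b)^2 ≤ (a ⬝ᵥ a) * (b ⬝ᵥ b) := by
  rw [dot_eq_inner a b, dot_eq_inner a a, dot_eq_inner b b, sq]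
  exact real_inner_mul_inner_self_le _ _

lemma bessel2 {d : ℕ} {a b : Fin d → ℝ} (ha : a ⬝ᵥ a = 1) (hb : b ⬝ᵥ b = 1)
    (hab : a ⬝ᵥ b = 0) (z : Fin d → ℝ) : (a ⬝ᵥ z)^2 + (b ⬝ᵥ z)^2 ≤ z ⬝ᵥ z := by
  have c1 : z ⬝ᵥ a = a ⬝ᵥ z := dotProduct_comm _ _
  have c2 : z ⬝ᵥ b = b ⬝ᵥ z := dotProduct_comm _ _
  have c3 : b ⬝ᵥ a = a ⬝ᵥ b := dotProduct_comm _ _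
  have h0 : 0 ≤ (z - (a ⬝ᵥ z) • a - (b ⬝ᵥ z) • b) ⬝ᵥ (z - (a ⬝ᵥ z) • a - (b ⬝ᵥ z) • b) :=
    dot_self_nonneg' _
  simp only [sub_dotProduct, dotProduct_sub, smul_dotProduct, dotProduct_smul, smul_eq_mul,
    c1, c2, c3, ha, hb, hab, mul_one, mul_zero, zero_mul] at h0
  nlinarith [h0]

lemma herm_dot {d : ℕ} {A : Matrix (Fin d) (Fin d) ℝ} (hA : A.IsHermitian)
    (u w : Fin d → ℝ) : u ⬝ᵥ (A *ᵥ w) = (A *ᵥ u) ⬝ᵥ w := by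
  rw [dotProduct_mulVec, ← mulVec_transpose, ← conjTranspose_eq_transpose_of_trivial, hA.eq]

lemma vnorm_mulVec_le_frob {d : ℕ} (A : Matrix (Fin d) (Fin d) ℝ) {w : Fin d → ℝ}
    (hw : vnorm w = 1) : vnorm (A *ᵥ w) ≤ frob A := by
  have hw1 : w ⬝ᵥ w = 1 := dot_self_of_unit hw
  rw [vnorm, frob]
  apply Real.sqrt_le_sqrt
  have step : (A *ᵥ w) ⬝ᵥ (A *ᵥ w) = ∑ i, (A i ⬝ᵥ w) * (A i ⬝ᵥ w) := rfl
  rw [step]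
  apply Finset.sum_le_sum
  intro i _
  have h := dot_sq_le (A i) w
  rw [hw1, mul_one] at h
  have hAi : A i ⬝ᵥ A i = ∑ j, (A i j)^2 := by simp [dotProduct, sq]
  nlinarith [h]

lemma spec_bddAbove {d : ℕ} (A : Matrix (Fin d) (Fin d) ℝ) :
    BddAbove {r : ℝ | ∃ v : Fin d → ℝ, vnorm v = 1 ∧ r = vnorm (A.mulVec v)} := by
  refine ⟨frob A, fun r hr => ?_⟩
  obtain ⟨w, hw, rfl⟩ := hr
  exact vnorm_mulVec_le_frob A hw

lemma spec_nonneg {d : ℕ} (A : Matrix (Fin d) (Fin d) ℝ) {e : Fin d → ℝ} (he : vnorm e = 1) :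
    0 ≤ spec A :=
  le_trans (vnorm_nonneg' _) (le_csSup (spec_bddAbove A) ⟨e, he, rfl⟩)

lemma abs_quad_le_spec {d : ℕ} (A : Matrix (Fin d) (Fin d) ℝ)
    {u : Fin d → ℝ} (hu : vnorm u = 1) : |u ⬝ᵥ (A *ᵥ u)| ≤ spec A := by
  have hu1 : u ⬝ᵥ u = 1 := dot_self_of_unit hu
  have h1 : |u ⬝ᵥ (A *ᵥ u)| ≤ vnorm (A *ᵥ u) := by
    have h := dot_sq_le u (A *ᵥ u)
    rw [hu1, one_mul] at h
    rw [vnorm, ← Real.sqrt_sq_eq_abs]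
    exact Real.sqrt_le_sqrt h
  exact h1.trans (le_csSup (spec_bddAbove A) ⟨u, hu, rfl⟩)

lemma vecMulVec_mulVec' {d : ℕ} (u w a : Fin d → ℝ) :
    vecMulVec u w *ᵥ a = (w ⬝ᵥ a) • u := by
  ext i
  simp only [mulVec, vecMulVec_apply, dotProduct, Pi.smul_apply, smul_eq_mul, Finset.sum_mul]
  apply Finset.sum_congr rfl
  intro j _
  ring

lemma dotProduct_sum' {d : ℕ} {ι : Type*} (s : Finset ι) (a : Fin d → ℝ) (f : ι → (Fin d → ℝ)) :
    a ⬝ᵥ (∑ i ∈ s, f i) = ∑ i ∈ s, a ⬝ᵥ f i := by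
  simp [dotProduct, Finset.sum_apply, Finset.mul_sum]
  rw [Finset.sum_comm]

lemma sum_mulVec' {d : ℕ} {ι : Type*} (s : Finset ι) (M : ι → Matrix (Fin d) (Fin d) ℝ)
    (a : Fin d → ℝ) : (∑ i ∈ s, M i) *ᵥ a = ∑ i ∈ s, (M i *ᵥ a) := by
  ext j
  simp only [mulVec, dotProduct, Finset.sum_apply, Matrix.sum_apply, Finset.sum_mul]
  rw [Finset.sum_comm]

lemma vecMulVec_selfT {d : ℕ} (u : Fin d → ℝ) : (vecMulVec u u)ᵀ = vecMulVec u u := by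
  ext i j
  simp [vecMulVec_apply, mul_comm]

lemma sum_mul_le_two_top {d : ℕ} (μ c : Fin d → ℝ) (hμ : Monotone μ) (L S : Fin d)
    (hLS : ∀ i, i ≠ L → i ≤ S) (hc0 : ∀ i, 0 ≤ c i) :
    ∑ i, μ i * c i ≤ μ L * c L + μ S * (∑ i, c i - c L) := by
  classical
  have hL : L ∈ Finset.univ (α := Fin d) := Finset.mem_univ L
  rw [← Finset.add_sum_erase _ _ hL, ← Finset.add_sum_erase _ c hL]
  have h1 : ∑ i ∈ Finset.univ.erase L, μ i * c i ≤ ∑ i ∈ Finset.univ.erase L, μ S * c i := by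
    apply Finset.sum_le_sum
    intro i hi
    exact mul_le_mul_of_nonneg_right (hμ (hLS i (Finset.mem_erase.1 hi).1)) (hc0 i)
  rw [← Finset.mul_sum] at h1
  have h2 : c L + ∑ i ∈ Finset.univ.erase L, c i - c L = ∑ i ∈ Finset.univ.erase L, c i := by ring
  rw [h2]
  linarith

lemma spectral_pack {d : ℕ} (A : Matrix (Fin d) (Fin d) ℝ) (hA : A.IsHermitian) :
    ∃ (g : Fin d → (Fin d → ℝ)) (μ : Fin d → ℝ),
      Monotone μ ∧
      (∀ k (h : k < d), eigk k A = μ (Fin.rev ⟨k, h⟩)) ∧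
      (∀ i, A *ᵥ g i = μ i • g i) ∧
      (∀ i j, g i ⬝ᵥ g j = if i = j then 1 else 0) ∧
      (∀ a b : Fin d → ℝ, a ⬝ᵥ b = ∑ i, (g i ⬝ᵥ a) * (g i ⬝ᵥ b)) := by
  classical
  set σ := Tuple.sort hA.eigenvalues with hσ
  set g : Fin d → (Fin d → ℝ) := fun i => ⇑(hA.eigenvectorBasis (σ i)) with hgdef
  have hg : ∀ i, (WithLp.equiv 2 (Fin d → ℝ)).symm (g i) = hA.eigenvectorBasis (σ i) := by
    intro i
    exact Equiv.symm_apply_apply _ _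
  refine ⟨g, fun i => hA.eigenvalues (σ i),
    ?_, ?_, ?_, ?_, ?_⟩
  · exact fun i j hij => Tuple.monotone_sort hA.eigenvalues hij
  · intro k h
    simp only [eigk, dif_pos h, dif_pos hA, Function.comp_apply]
    rfl
  · intro i
    exact hA.mulVec_eigenvectorBasis (σ i)
  · intro i j
    have h := hA.eigenvectorBasis.orthonormal
    rw [dot_eq_inner, hg, hg]
    rcases eq_or_ne i j with rfl | hne
    · rw [if_pos rfl, real_inner_self_eq_norm_mul_norm, h.1 (σ i), one_mul]
    · have : σ i ≠ σ j := fun hc => hne (σ.injective hc)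
      simp [hne, h.2 this]
  · intro a b
    have h := hA.eigenvectorBasis.sum_inner_mul_inner
      ((WithLp.equiv 2 (Fin d → ℝ)).symm a) ((WithLp.equiv 2 (Fin d → ℝ)).symm b)
    rw [dot_eq_inner, ← h, ← Equiv.sum_comp σ]
    congr 1
    funext i
    rw [dot_eq_inner, dot_eq_inner, hg, real_inner_comm ((WithLp.equiv 2 (Fin d → ℝ)).symm a)]

lemma quad_of_pack {d : ℕ} {A : Matrix (Fin d) (Fin d) ℝ} (hA : A.IsHermitian)
    {g : Fin d → Fin d → ℝ} {μ : Fin d → ℝ}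
    (hvec : ∀ i, A *ᵥ g i = μ i • g i)
    (hpar : ∀ a b : Fin d → ℝ, a ⬝ᵥ b = ∑ i, (g i ⬝ᵥ a) * (g i ⬝ᵥ b)) (a : Fin d → ℝ) :
    a ⬝ᵥ (A *ᵥ a) = ∑ i, μ i * (g i ⬝ᵥ a)^2 := by
  rw [hpar a (A *ᵥ a)]
  apply Finset.sum_congr rfl
  intro i _
  rw [herm_dot hA, hvec i, smul_dotProduct, smul_eq_mul]
  ring

/-- **Lemma 5 (correlation increase, deterministic form).** -/
theorem correlation_increase {d ℓ : ℕ} (hℓ : 0 < ℓ)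
    (Q : Matrix (Fin d) (Fin d) ℝ) (hQ : Q.PosSemidef)
    (x : Fin d → ℝ) (hx : vnorm x = 1) (hxEig : Q.mulVec x = eigk 0 Q • x)
    (v : Fin ℓ → (Fin d → ℝ)) (V : ℝ) (hv : ∀ i, vnorm (v i) ≤ V)
    (Vmat : Matrix (Fin d) (Fin d) ℝ) (hVmat : Vmat = ∑ i, vecMulVec (v i) (v i))
    (D : Matrix (Fin d) (Fin d) ℝ) (hD : D.IsSymm)
    (X : Matrix (Fin d) (Fin d) ℝ) (hX : X = (ℓ : ℝ) • Q + Vmat + D)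
    (wh : Fin d → ℝ) (hwh : vnorm wh = 1) (hCorr : (x ⬝ᵥ wh)^2 ≥ 1/2)
    (η α : ℝ) (hη : 0 < η) (hα : 0 ≤ α) (hηα : η * α < 1)
    (W : Matrix (Fin d) (Fin d) ℝ)
    (hW : W = (1 - η * α) • vecMulVec wh wh + η • X)
    (hgapW : eigk 0 W > eigk 1 W)
    (w' : Fin d → ℝ) (hw' : vnorm w' = 1)
    (hEig : W.mulVec w' = eigk 0 W • w') :
    (x ⬝ᵥ w')^2 ≥ (x ⬝ᵥ wh)^2 +
      η * ℓ * ((1 - (x ⬝ᵥ wh)^2) * (eigk 0 Q - eigk 1 Q)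
          - (x ⬝ᵥ wh)^2 * V^2 - 4 * spec D / ℓ)
        / (eigk 0 W - eigk 1 W) := by
  classical
  have hx1 : x ⬝ᵥ x = 1 := dot_self_of_unit hx
  have hwh1 : wh ⬝ᵥ wh = 1 := dot_self_of_unit hwh
  have hw'1 : w' ⬝ᵥ w' = 1 := dot_self_of_unit hw'
  have hs0 : 0 ≤ spec D := spec_nonneg D hx
  have hV0 : 0 ≤ V := le_trans (vnorm_nonneg' _) (hv ⟨0, hℓ⟩)
  have hℓR : (1:ℝ) ≤ (ℓ:ℝ) := by exact_mod_cast hℓ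
  have hℓ0 : (0:ℝ) < (ℓ:ℝ) := by linarith
  have h1ηα : 0 < 1 - η * α := by linarith
  have hb1 : (x ⬝ᵥ wh)^2 ≤ 1 := by
    have h := dot_sq_le x wh
    rw [hx1, hwh1] at h
    linarith
  -- quadratic form expansion of W
  have hVmv : ∀ a : Fin d → ℝ, Vmat *ᵥ a = ∑ i, (v i ⬝ᵥ a) • v i := by
    intro a
    rw [hVmat, sum_mulVec']
    exact Finset.sum_congr rfl fun i _ => vecMulVec_mulVec' _ _ _
  have hWq : ∀ a : Fin d → ℝ, a ⬝ᵥ (W *ᵥ a) =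
      (1 - η*α) * (wh ⬝ᵥ a)^2
        + η * ((ℓ:ℝ) * (a ⬝ᵥ (Q *ᵥ a)) + (∑ i, (v i ⬝ᵥ a)^2) + a ⬝ᵥ (D *ᵥ a)) := by
    intro a
    rw [hW, hX, add_mulVec, smul_mulVec, smul_mulVec, add_mulVec, add_mulVec,
      smul_mulVec, hVmv, vecMulVec_mulVec']
    have h1 : a ⬝ᵥ wh = wh ⬝ᵥ a := dotProduct_comm _ _
    simp only [dotProduct_add, dotProduct_smul, dotProduct_sum', smul_eq_mul, h1]
    have h3 : ∑ i : Fin ℓ, (v i ⬝ᵥ a) * (a ⬝ᵥ v i) = ∑ i : Fin ℓ, (v i ⬝ᵥ a)^2 :=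
      Finset.sum_congr rfl fun i _ => by rw [dotProduct_comm a (v i)]; ring
    rw [h3]
    ring
  rcases lt_or_ge d 2 with hd | hd
  · -- degenerate dimensions
    interval_cases d
    · exfalso
      simp [vnorm, dotProduct] at hx
    · have e1W : eigk 1 W = 0 := by simp [eigk]
      have e1Q : eigk 1 Q = 0 := by simp [eigk]
      have hgap : 0 < eigk 0 W - eigk 1 W := by linarith
      have hx0 : x 0 * x 0 = 1 := by simpa [dotProduct] using hx1
      have hwh0 : wh 0 * wh 0 = 1 := by simpa [dotProduct] using hwh1
      have hw'0 : w' 0 * w' 0 = 1 := by simpa [dotProduct] using hw'1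
      have hbx : (x ⬝ᵥ wh)^2 = 1 := by
        have hdp : x ⬝ᵥ wh = x 0 * wh 0 := by simp [dotProduct]
        rw [hdp]
        linear_combination (wh 0 * wh 0) * hx0 + hwh0
      have hgx : (x ⬝ᵥ w')^2 = 1 := by
        have hdp : x ⬝ᵥ w' = x 0 * w' 0 := by simp [dotProduct]
        rw [hdp]
        linear_combination (w' 0 * w' 0) * hx0 + hw'0
      rw [hbx, hgx, e1Q, e1W]
      have hsl : 0 ≤ 4 * spec D / (ℓ:ℝ) := by positivity
      have hnum : (1 - 1) * (eigk 0 Q - 0) - 1*V^2 - 4 * spec D / (ℓ:ℝ) ≤ 0 := by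
        have hVsq : 0 ≤ V^2 := sq_nonneg V
        linarith [hsl]
      have hmul : η * (ℓ:ℝ) * ((1 - 1) * (eigk 0 Q - 0) - 1*V^2 - 4 * spec D / (ℓ:ℝ)) ≤ 0 := by
        have hA : 0 ≤ η * (ℓ:ℝ) := by positivity
        have hB := mul_nonneg hA (neg_nonneg.2 hnum)
        linarith [hB]
      have hdiv : η * (ℓ:ℝ) * ((1 - 1) * (eigk 0 Q - 0) - 1*V^2 - 4 * spec D / (ℓ:ℝ))
          / (eigk 0 W - 0) ≤ 0 :=
        div_nonpos_of_nonpos_of_nonneg hmul (by linarith)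
      linarith
  · -- main case
    have hQh : Q.IsHermitian := hQ.1
    have hQt : Qᵀ = Q := by
      rw [← conjTranspose_eq_transpose_of_trivial]
      exact hQh.eq
    have hDt : Dᵀ = D := hD
    have hWt : Wᵀ = W := by
      rw [hW, hX, hVmat]
      simp only [transpose_add, transpose_smul, Matrix.transpose_sum, vecMulVec_selfT, hQt, hDt]
    have hWh : W.IsHermitian := by
      show Wᴴ = W
      rw [conjTranspose_eq_transpose_of_trivial]
      exact hWt
    obtain ⟨gW, μW, hWmono, hWeigk, hWvec, hWorth, hWpar⟩ := spectral_pack W hWh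
    obtain ⟨gQ, μQ, hQmono, hQeigk, hQvec, hQorth, hQpar⟩ := spectral_pack Q hQh
    have h0d : 0 < d := by omega
    have h1d : 1 < d := by omega
    set L : Fin d := ⟨d-1, by omega⟩ with hLdef
    set S : Fin d := ⟨d-2, by omega⟩ with hSdef
    have hrev0 : Fin.rev (⟨0, h0d⟩ : Fin d) = L := by
      apply Fin.ext
      rw [Fin.val_rev]
    have hrev1 : Fin.rev (⟨1, h1d⟩ : Fin d) = S := by
      apply Fin.ext
      rw [Fin.val_rev]
    have e0W : eigk 0 W = μW L := by rw [hWeigk 0 h0d, hrev0]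
    have e1W : eigk 1 W = μW S := by rw [hWeigk 1 h1d, hrev1]
    have e0Q : eigk 0 Q = μQ L := by rw [hQeigk 0 h0d, hrev0]
    have e1Q : eigk 1 Q = μQ S := by rw [hQeigk 1 h1d, hrev1]
    have hSL : S ≤ L := by
      rw [Fin.le_def]
      simp [hLdef, hSdef]
      omega
    have hLS : ∀ i : Fin d, i ≠ L → i ≤ S := by
      intro i hi
      have h1 := i.isLt
      have h2 : i.val ≠ d-1 := fun hc => hi (Fin.ext (by simp [hLdef, hc]))
      rw [Fin.le_def]
      simp [hSdef]
      omega
    have hSneL : S ≠ L := by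
      intro hc
      have := congrArg Fin.val hc
      simp [hLdef, hSdef] at this
      omega
    -- parseval squares
    have hsqW : ∀ a : Fin d → ℝ, ∑ i, (gW i ⬝ᵥ a)^2 = a ⬝ᵥ a := by
      intro a
      rw [hWpar a a]
      exact Finset.sum_congr rfl fun i _ => sq (gW i ⬝ᵥ a)
    have hsqQ : ∀ a : Fin d → ℝ, ∑ i, (gQ i ⬝ᵥ a)^2 = a ⬝ᵥ a := by
      intro a
      rw [hQpar a a]
      exact Finset.sum_congr rfl fun i _ => sq (gQ i ⬝ᵥ a)
    -- coefficients of w' in the W-eigenbasis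
    have hcoef : ∀ i : Fin d, i ≠ L → gW i ⬝ᵥ w' = 0 := by
      intro i hi
      have h1 : gW i ⬝ᵥ (W *ᵥ w') = μW i * (gW i ⬝ᵥ w') := by
        rw [herm_dot hWh, hWvec i, smul_dotProduct, smul_eq_mul]
      have h2 : gW i ⬝ᵥ (W *ᵥ w') = eigk 0 W * (gW i ⬝ᵥ w') := by
        rw [hEig, dotProduct_smul, smul_eq_mul]
      have hlt : μW i < eigk 0 W := by
        have hm := hWmono (hLS i hi)
        rw [e0W]
        rw [e0W, e1W] at hgapW
        linarith
      by_contra hc0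
      have hcc := mul_right_cancel₀ hc0 (h1.symm.trans h2)
      linarith
    have htop : (gW L ⬝ᵥ w')^2 = 1 := by
      have hp := hsqW w'
      rw [hw'1] at hp
      rw [← hp, Finset.sum_eq_single_of_mem L (Finset.mem_univ L)
        (fun i _ hi => by rw [hcoef i hi]; ring)]
    have hγL : (x ⬝ᵥ w')^2 = (gW L ⬝ᵥ x)^2 := by
      have hdp : x ⬝ᵥ w' = (gW L ⬝ᵥ x) * (gW L ⬝ᵥ w') := by
        rw [hWpar x w']
        exact Finset.sum_eq_single_of_mem L (Finset.mem_univ L)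
          (fun i _ hi => by rw [hcoef i hi, mul_zero])
      rw [hdp]
      have hr : ((gW L ⬝ᵥ x) * (gW L ⬝ᵥ w'))^2 = (gW L ⬝ᵥ x)^2 * (gW L ⬝ᵥ w')^2 := by ring
      rw [hr, htop, mul_one]
    -- E1
    have E1 : x ⬝ᵥ (W *ᵥ x) ≤ eigk 0 W * (x ⬝ᵥ w')^2 + eigk 1 W * (1 - (x ⬝ᵥ w')^2) := by
      have h := sum_mul_le_two_top μW (fun i => (gW i ⬝ᵥ x)^2) hWmono L S hLS
        (fun i => sq_nonneg _)
      rw [hsqW x, hx1] at h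
      rw [quad_of_pack hWh hWvec hWpar x, e0W, e1W, hγL]
      linarith
    -- u := gW S, the second eigenvector
    set u : Fin d → ℝ := gW S with hudef
    have hu1 : u ⬝ᵥ u = 1 := by
      have := hWorth S S
      simpa using this
    have huvn : vnorm u = 1 := by rw [vnorm, hu1, Real.sqrt_one]
    have hw'u : w' ⬝ᵥ u = 0 := by
      rw [dotProduct_comm]
      exact hcoef S hSneL
    have hlam1 : eigk 0 W = w' ⬝ᵥ (W *ᵥ w') := by
      rw [hEig, dotProduct_smul, smul_eq_mul, hw'1, mul_one]
    have hlam2 : eigk 1 W = u ⬝ᵥ (W *ᵥ u) := by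
      rw [hWvec S, dotProduct_smul, smul_eq_mul, hu1, mul_one, e1W]
    -- upper bound for quadratic form of Q at any unit vector
    have hQsum : ∀ a : Fin d → ℝ, a ⬝ᵥ a = 1 → a ⬝ᵥ (Q *ᵥ a) ≤ eigk 0 Q := by
      intro a ha
      have hsum : ∑ i, (gQ i ⬝ᵥ a)^2 = 1 := by rw [hsqQ a, ha]
      have h := sum_mul_le_two_top μQ (fun i => (gQ i ⬝ᵥ a)^2) hQmono L S hLS
        (fun i => sq_nonneg _)
      rw [hsum] at h
      have hcL1 : (gQ L ⬝ᵥ a)^2 ≤ 1 := by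
        rw [← hsum]
        exact Finset.single_le_sum (f := fun i => (gQ i ⬝ᵥ a)^2)
          (fun i _ => sq_nonneg _) (Finset.mem_univ L)
      have hμ : μQ S ≤ μQ L := hQmono hSL
      rw [quad_of_pack hQh hQvec hQpar a, e0Q]
      have hprod := mul_nonneg (sub_nonneg.2 hμ) (sub_nonneg.2 hcL1)
      linarith [h, hprod]
    -- Ky Fan 2-bound for Q at the orthonormal pair (w', u)
    have hKF : w' ⬝ᵥ (Q *ᵥ w') + u ⬝ᵥ (Q *ᵥ u) ≤ eigk 0 Q + eigk 1 Q := by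
      have hB : ∀ i, (gQ i ⬝ᵥ w')^2 + (gQ i ⬝ᵥ u)^2 ≤ 1 := by
        intro i
        have hg1 : gQ i ⬝ᵥ gQ i = 1 := by simpa using hQorth i i
        have hb := bessel2 hw'1 hu1 hw'u (gQ i)
        rw [hg1] at hb
        rw [dotProduct_comm (gQ i) w', dotProduct_comm (gQ i) u]
        exact hb
      have hsum2 : ∑ i, ((gQ i ⬝ᵥ w')^2 + (gQ i ⬝ᵥ u)^2) = 2 := by
        rw [Finset.sum_add_distrib, hsqQ w', hsqQ u, hw'1, hu1]
        norm_num
      have h := sum_mul_le_two_top μQ (fun i => (gQ i ⬝ᵥ w')^2 + (gQ i ⬝ᵥ u)^2) hQmono L S hLS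
        (fun i => by positivity)
      rw [hsum2] at h
      have hsplit : ∑ i, μQ i * ((gQ i ⬝ᵥ w')^2 + (gQ i ⬝ᵥ u)^2)
          = ∑ i, μQ i * (gQ i ⬝ᵥ w')^2 + ∑ i, μQ i * (gQ i ⬝ᵥ u)^2 := by
        rw [← Finset.sum_add_distrib]
        exact Finset.sum_congr rfl fun i _ => by ring
      rw [hsplit] at h
      have hμ : μQ S ≤ μQ L := hQmono hSL
      rw [quad_of_pack hQh hQvec hQpar w', quad_of_pack hQh hQvec hQpar u, e0Q, e1Q]
      have hprod := mul_nonneg (sub_nonneg.2 hμ) (sub_nonneg.2 (hB L))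
      linarith [h, hprod]
    -- Bessel bounds for wh and for the v i
    have hwhw'u : (wh ⬝ᵥ w')^2 + (wh ⬝ᵥ u)^2 ≤ 1 := by
      have hb := bessel2 hw'1 hu1 hw'u wh
      rw [hwh1] at hb
      rw [dotProduct_comm wh w', dotProduct_comm wh u]
      exact hb
    have hvV : ∀ i, v i ⬝ᵥ v i ≤ V^2 := by
      intro i
      rw [← vnorm_sq]
      exact pow_le_pow_left₀ (vnorm_nonneg' _) (hv i) 2
    have hPw'u : (∑ i, (v i ⬝ᵥ w')^2) + (∑ i, (v i ⬝ᵥ u)^2) ≤ (ℓ:ℝ) * V^2 := by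
      rw [← Finset.sum_add_distrib]
      calc ∑ i, ((v i ⬝ᵥ w')^2 + (v i ⬝ᵥ u)^2) ≤ ∑ _i : Fin ℓ, V^2 := by
            apply Finset.sum_le_sum
            intro i _
            have hb := bessel2 hw'1 hu1 hw'u (v i)
            rw [dotProduct_comm (v i) w', dotProduct_comm (v i) u]
            linarith [hvV i]
        _ = (ℓ:ℝ) * V^2 := by simp [Finset.sum_const, Finset.card_univ, nsmul_eq_mul]
    have hPw' : (∑ i, (v i ⬝ᵥ w')^2) ≤ (ℓ:ℝ) * V^2 := by
      calc ∑ i, (v i ⬝ᵥ w')^2 ≤ ∑ _i : Fin ℓ, V^2 := by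
            apply Finset.sum_le_sum
            intro i _
            have h := dot_sq_le (v i) w'
            rw [hw'1, mul_one] at h
            linarith [hvV i]
        _ = (ℓ:ℝ) * V^2 := by simp [Finset.sum_const, Finset.card_univ, nsmul_eq_mul]
    -- D bounds
    have hw'D : w' ⬝ᵥ (D *ᵥ w') ≤ spec D := (abs_le.1 (abs_quad_le_spec D hw')).2
    have huD : u ⬝ᵥ (D *ᵥ u) ≤ spec D := (abs_le.1 (abs_quad_le_spec D huvn)).2
    have hxD : -(spec D) ≤ x ⬝ᵥ (D *ᵥ x) := (abs_le.1 (abs_quad_le_spec D hx)).1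
    have hwhw'1 : (wh ⬝ᵥ w')^2 ≤ 1 := by
      have h := dot_sq_le wh w'
      rw [hwh1, hw'1] at h
      linarith
    -- quantitative expansions
    have hxQ : x ⬝ᵥ (Q *ᵥ x) = eigk 0 Q := by
      rw [hxEig, dotProduct_smul, smul_eq_mul, hx1, mul_one]
    have hPx : 0 ≤ ∑ i, (v i ⬝ᵥ x)^2 := Finset.sum_nonneg fun i _ => sq_nonneg _
    have hE2 : x ⬝ᵥ (W *ᵥ x) ≥ (1 - η*α) * (x ⬝ᵥ wh)^2 + η * (ℓ:ℝ) * eigk 0 Q - η * spec D := by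
      have h := hWq x
      rw [hxQ, dotProduct_comm wh x] at h
      have m1 : 0 ≤ η * (∑ i, (v i ⬝ᵥ x)^2) := mul_nonneg hη.le hPx
      have m2 : η * (-(spec D)) ≤ η * (x ⬝ᵥ (D *ᵥ x)) := mul_le_mul_of_nonneg_left hxD hη.le
      linarith [h, m1, m2]
    have e3 : eigk 0 W = (1 - η*α) * (wh ⬝ᵥ w')^2
        + η * ((ℓ:ℝ) * (w' ⬝ᵥ (Q *ᵥ w')) + (∑ i, (v i ⬝ᵥ w')^2) + w' ⬝ᵥ (D *ᵥ w')) := by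
      rw [hlam1, hWq w']
    have e4 : eigk 1 W = (1 - η*α) * (wh ⬝ᵥ u)^2
        + η * ((ℓ:ℝ) * (u ⬝ᵥ (Q *ᵥ u)) + (∑ i, (v i ⬝ᵥ u)^2) + u ⬝ᵥ (D *ᵥ u)) := by
      rw [hlam2, hWq u]
    have hηℓ : (0:ℝ) ≤ η * (ℓ:ℝ) := by positivity
    have hU2 : eigk 0 W + eigk 1 W
        ≤ (1 - η*α) + η * ((ℓ:ℝ)*(eigk 0 Q + eigk 1 Q) + (ℓ:ℝ)*V^2 + 2*spec D) := by
      have m1 := mul_le_mul_of_nonneg_left hwhw'u h1ηα.le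
      have m2 := mul_le_mul_of_nonneg_left hKF hηℓ
      have m3 := mul_le_mul_of_nonneg_left hPw'u hη.le
      have m4 : η * (w' ⬝ᵥ (D *ᵥ w') + u ⬝ᵥ (D *ᵥ u)) ≤ η * (2*spec D) :=
        mul_le_mul_of_nonneg_left (by linarith) hη.le
      linarith [m1, m2, m3, m4, e3, e4]
    have hU3 : eigk 0 W ≤ (1 - η*α) + η * ((ℓ:ℝ)*eigk 0 Q + (ℓ:ℝ)*V^2 + spec D) := by
      have m1 := mul_le_mul_of_nonneg_left hwhw'1 h1ηα.le
      have m2 := mul_le_mul_of_nonneg_left (hQsum w' hw'1) hηℓ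
      have m3 := mul_le_mul_of_nonneg_left hPw' hη.le
      have m4 := mul_le_mul_of_nonneg_left hw'D hη.le
      linarith [m1, m2, m3, m4, e3]
    have n1 := mul_le_mul_of_nonneg_left hU2 (by linarith [hCorr] : (0:ℝ) ≤ 1 - (x ⬝ᵥ wh)^2)
    have n2 := mul_le_mul_of_nonneg_left hU3 (by linarith [hCorr] : (0:ℝ) ≤ 2*(x ⬝ᵥ wh)^2 - 1)
    have hgap : 0 < eigk 0 W - eigk 1 W := by linarith [hgapW]
    have hdiv : η * (ℓ:ℝ) * (4 * spec D / (ℓ:ℝ)) = 4*(η * spec D) := by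
      field_simp
    have hηs : 0 ≤ η * spec D := mul_nonneg hη.le hs0
    have key : η * ℓ * ((1 - (x ⬝ᵥ wh)^2) * (eigk 0 Q - eigk 1 Q)
          - (x ⬝ᵥ wh)^2 * V^2 - 4 * spec D / ℓ)
        ≤ (eigk 0 W - eigk 1 W) * ((x ⬝ᵥ w')^2 - (x ⬝ᵥ wh)^2) := by
      linarith [E1, hE2, n1, n2, hdiv, hηs]
    have hfin : η * ℓ * ((1 - (x ⬝ᵥ wh)^2) * (eigk 0 Q - eigk 1 Q)
          - (x ⬝ᵥ wh)^2 * V^2 - 4 * spec D / ℓ) / (eigk 0 W - eigk 1 W)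
        ≤ (x ⬝ᵥ w')^2 - (x ⬝ᵥ wh)^2 :=
      (div_le_iff₀ hgap).mpr (by linarith [key])
    linarith [hfin]
end

section
/- (Per-iteration regret inequality; claim in the proof of Lemma 7.) Let ŵ, w ∈ R^d be unit vectors, let X ∈ R^{d×d} be symmetric, let η > 0 and α ≥ 0 with ηα < 1, and set W := (1 − ηα) ŵ ŵ^⊤ + η X. Suppose there is a unit vector w' such that w' w'^⊤ = Π_S[W], and let ŵ' be a unit vector with ‖ŵ' ŵ'^⊤ − w' w'^⊤‖_F ≤ γ. Then (w w^⊤ − ŵ ŵ^⊤) • X ≤ (1/(2η)) · ( (1 − ηα) ‖ŵ ŵ^⊤ − w w^⊤‖_F^2 − ‖ŵ' ŵ'^⊤ − w w^⊤‖_F^2 ) + (3√2/2)·(γ/η) + (η/2)·‖X − α ŵ ŵ^⊤‖_F^2, where A • B := trace(A^⊤ B) denotes the Frobenius inner product. -/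
open Matrix MeasureTheory ProbabilityTheory BigOperators

noncomputable def ip {d : ℕ} (A B : Matrix (Fin d) (Fin d) ℝ) : ℝ := ∑ i, ∑ j, A i j * B i j

variable {d : ℕ}

lemma ip_self_nonneg (A : Matrix (Fin d) (Fin d) ℝ) : 0 ≤ ip A A :=
  Finset.sum_nonneg fun i _ => Finset.sum_nonneg fun j _ => mul_self_nonneg _

lemma ip_comm (A B : Matrix (Fin d) (Fin d) ℝ) : ip A B = ip B A := by
  unfold ip; exact Finset.sum_congr rfl fun i _ => Finset.sum_congr rfl fun j _ => mul_comm _ _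

lemma ip_add_left (A B C : Matrix (Fin d) (Fin d) ℝ) : ip (A + B) C = ip A C + ip B C := by
  simp [ip, Matrix.add_apply, add_mul, Finset.sum_add_distrib]

lemma ip_sub_left (A B C : Matrix (Fin d) (Fin d) ℝ) : ip (A - B) C = ip A C - ip B C := by
  simp [ip, Matrix.sub_apply, sub_mul, Finset.sum_sub_distrib]

lemma ip_smul_left (c : ℝ) (A B : Matrix (Fin d) (Fin d) ℝ) : ip (c • A) B = c * ip A B := by
  simp [ip, Matrix.smul_apply, smul_eq_mul, mul_assoc, Finset.mul_sum]

lemma ip_sub_right (A B C : Matrix (Fin d) (Fin d) ℝ) : ip A (B - C) = ip A B - ip A C := by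
  rw [ip_comm, ip_sub_left, ip_comm B A, ip_comm C A]

lemma ip_smul_right (c : ℝ) (A B : Matrix (Fin d) (Fin d) ℝ) : ip A (c • B) = c * ip A B := by
  rw [ip_comm, ip_smul_left, ip_comm]

lemma ip_expand (A B : Matrix (Fin d) (Fin d) ℝ) :
    ip (A + B) (A + B) = ip A A + 2 * ip A B + ip B B := by
  rw [ip_add_left, ip_comm A (A+B), ip_comm B (A+B), ip_add_left, ip_add_left, ip_comm B A]
  ring

lemma frob_eq (A : Matrix (Fin d) (Fin d) ℝ) : frob A = Real.sqrt (ip A A) := by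
  unfold frob ip
  congr 1
  exact Finset.sum_congr rfl fun i _ => Finset.sum_congr rfl fun j _ => sq (A i j)

lemma frob_nonneg (A : Matrix (Fin d) (Fin d) ℝ) : 0 ≤ frob A := Real.sqrt_nonneg _

lemma frob_sq (A : Matrix (Fin d) (Fin d) ℝ) : frob A ^ 2 = ip A A := by
  rw [frob_eq, Real.sq_sqrt (ip_self_nonneg A)]

lemma ip_cauchy (A B : Matrix (Fin d) (Fin d) ℝ) : ip A B ≤ frob A * frob B := by
  have h := Finset.sum_mul_sq_le_sq_mul_sq Finset.univ
    (fun p : Fin d × Fin d => A p.1 p.2) (fun p : Fin d × Fin d => B p.1 p.2)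
  have e1 : ip A B = ∑ p : Fin d × Fin d, A p.1 p.2 * B p.1 p.2 :=
    (Fintype.sum_prod_type' (fun i j => A i j * B i j)).symm
  have e2 : ip A A = ∑ p : Fin d × Fin d, (A p.1 p.2)^2 := by
    rw [ip, Fintype.sum_prod_type' (fun i j => (A i j)^2)]
    exact Finset.sum_congr rfl fun i _ => Finset.sum_congr rfl fun j _ => (sq (A i j)).symm
  have e3 : ip B B = ∑ p : Fin d × Fin d, (B p.1 p.2)^2 := by
    rw [ip, Fintype.sum_prod_type' (fun i j => (B i j)^2)]
    exact Finset.sum_congr rfl fun i _ => Finset.sum_congr rfl fun j _ => (sq (B i j)).symm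
  have h2 : (ip A B)^2 ≤ ip A A * ip B B := by rw [e1, e2, e3]; exact h
  calc ip A B ≤ |ip A B| := le_abs_self _
    _ = Real.sqrt ((ip A B)^2) := (Real.sqrt_sq_eq_abs _).symm
    _ ≤ Real.sqrt (ip A A * ip B B) := Real.sqrt_le_sqrt h2
    _ = frob A * frob B := by
        rw [Real.sqrt_mul (ip_self_nonneg A), frob_eq, frob_eq]

lemma trace_transpose_mul_eq_ip (A B : Matrix (Fin d) (Fin d) ℝ) :
    Matrix.trace (Aᵀ * B) = ip A B := by
  rw [Matrix.trace, ip]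
  simp only [Matrix.diag_apply, Matrix.mul_apply, Matrix.transpose_apply]
  rw [Finset.sum_comm]

lemma unit_dot {v : Fin d → ℝ} (hv : vnorm v = 1) : v ⬝ᵥ v = 1 := by
  have h0 : 0 ≤ v ⬝ᵥ v := Finset.sum_nonneg fun i _ => mul_self_nonneg _
  have := congrArg (fun x => x^2) hv
  simpa [vnorm, Real.sq_sqrt h0] using this

lemma ip_vecMulVec (u v : Fin d → ℝ) :
    ip (vecMulVec u u) (vecMulVec v v) = (u ⬝ᵥ v)^2 := by
  simp only [ip, vecMulVec_apply, dotProduct, sq, Finset.sum_mul_sum]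
  exact Finset.sum_congr rfl fun i _ => Finset.sum_congr rfl fun j _ => by ring

lemma vecMulVec_mem_spectra {v : Fin d → ℝ} (hv : vnorm v = 1) :
    vecMulVec v v ∈ Spectrahedron d := by
  have hdot := unit_dot hv
  refine ⟨posSemidef_iff_dotProduct_mulVec.mpr ⟨?_, ?_⟩, ?_⟩
  · ext i j
    simp [Matrix.conjTranspose_apply, vecMulVec_apply, mul_comm]
  · intro x
    have hmv : (vecMulVec v v) *ᵥ x = (v ⬝ᵥ x) • v := by
      ext i
      simp only [Matrix.mulVec, vecMulVec_apply, dotProduct, Pi.smul_apply, smul_eq_mul,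
        Finset.sum_mul]
      exact Finset.sum_congr rfl fun j _ => by ring
    rw [star_trivial, hmv, dotProduct_smul, smul_eq_mul, dotProduct_comm]
    exact mul_self_nonneg _
  · simpa [Matrix.trace, Matrix.diag, vecMulVec_apply, dotProduct] using hdot

lemma convex_spectra {P Z : Matrix (Fin d) (Fin d) ℝ}
    (hP : P ∈ Spectrahedron d) (hZ : Z ∈ Spectrahedron d) {t : ℝ}
    (ht0 : 0 ≤ t) (ht1 : t ≤ 1) : P + t • (Z - P) ∈ Spectrahedron d := by
  obtain ⟨⟨hPh, hPq⟩, hPt⟩ := hP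
  obtain ⟨⟨hZh, hZq⟩, hZt⟩ := hZ
  refine ⟨posSemidef_iff_dotProduct_mulVec.mpr ⟨?_, ?_⟩, ?_⟩
  · show _ = _
    rw [Matrix.conjTranspose_add, Matrix.conjTranspose_smul, Matrix.conjTranspose_sub,
      hPh.eq, hZh.eq, star_trivial]
  · intro x
    have h1 := (posSemidef_iff_dotProduct_mulVec.mp ⟨hPh, hPq⟩).2 x
    have h2 := (posSemidef_iff_dotProduct_mulVec.mp ⟨hZh, hZq⟩).2 x
    rw [Matrix.add_mulVec, Matrix.smul_mulVec, Matrix.sub_mulVec,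
      dotProduct_add, dotProduct_smul, dotProduct_sub, smul_eq_mul]
    nlinarith
  · rw [Matrix.trace_add, Matrix.trace_smul, Matrix.trace_sub, hPt, hZt, smul_eq_mul]
    ring

lemma ip_diff_vecMulVec {u v : Fin d → ℝ} (hu : vnorm u = 1) (hv : vnorm v = 1) :
    ip (vecMulVec u u - vecMulVec v v) (vecMulVec u u - vecMulVec v v)
      = 2 - 2 * (u ⬝ᵥ v)^2 := by
  rw [ip_sub_left, ip_sub_right, ip_sub_right, ip_vecMulVec, ip_vecMulVec, ip_vecMulVec,
    ip_vecMulVec, unit_dot hu, unit_dot hv]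
  have : v ⬝ᵥ u = u ⬝ᵥ v := dotProduct_comm _ _
  rw [this]; ring

lemma frob_diff_le_sqrt_two {u v : Fin d → ℝ} (hu : vnorm u = 1) (hv : vnorm v = 1) :
    frob (vecMulVec u u - vecMulVec v v) ≤ Real.sqrt 2 := by
  rw [frob_eq, ip_diff_vecMulVec hu hv]
  exact Real.sqrt_le_sqrt (by nlinarith [sq_nonneg (u ⬝ᵥ v)])

set_option maxHeartbeats 1000000 in
/-- **Per-iteration regret inequality** (claim in the proof of Lemma 7). -/
theorem per_iteration_regret_inequality {d : ℕ}
    (wh w : Fin d → ℝ) (hwh : vnorm wh = 1) (hw : vnorm w = 1)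
    (X : Matrix (Fin d) (Fin d) ℝ) (hXsymm : X.IsSymm)
    (η α : ℝ) (hη : 0 < η) (hα : 0 ≤ α) (hηα : η * α < 1)
    (W : Matrix (Fin d) (Fin d) ℝ)
    (hW : W = (1 - η * α) • vecMulVec wh wh + η • X)
    (w' : Fin d → ℝ) (hw' : vnorm w' = 1)
    (hproj : IsProjSpectrahedron W (vecMulVec w' w'))
    (wh' : Fin d → ℝ) (hwh' : vnorm wh' = 1)
    (γ : ℝ) (hγ : frob (vecMulVec wh' wh' - vecMulVec w' w') ≤ γ) :
    Matrix.trace ((vecMulVec w w - vecMulVec wh wh)ᵀ * X) ≤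
      (1 / (2 * η)) * ((1 - η * α) * frob (vecMulVec wh wh - vecMulVec w w)^2
          - frob (vecMulVec wh' wh' - vecMulVec w w)^2)
        + (3 * Real.sqrt 2 / 2) * (γ / η)
        + (η / 2) * frob (X - α • vecMulVec wh wh)^2 := by
  obtain ⟨hPmem, hPmin⟩ := hproj
  set H := vecMulVec wh wh with hHdef
  set Z := vecMulVec w w with hZdef
  set P := vecMulVec w' w' with hPdef
  set H' := vecMulVec wh' wh' with hH'def
  have hZmem : Z ∈ Spectrahedron d := vecMulVec_mem_spectra hw
  -- obtuse angle property of the projection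
  have obtuse : 0 ≤ ip (P - W) (Z - P) := by
    by_contra hcon
    push_neg at hcon
    have hs : 0 ≤ ip (Z - P) (Z - P) := ip_self_nonneg _
    have hquad : ∀ t : ℝ, 0 ≤ t → t ≤ 1 →
        0 ≤ 2 * t * ip (P - W) (Z - P) + t^2 * ip (Z - P) (Z - P) := by
      intro t ht0 ht1
      have hle := hPmin _ (convex_spectra hPmem hZmem ht0 ht1)
      have hsq := pow_le_pow_left₀ (frob_nonneg _) hle 2
      rw [frob_sq, frob_sq] at hsq
      have he : P + t • (Z - P) - W = (P - W) + t • (Z - P) := by abel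
      rw [he, ip_expand, ip_smul_right, ip_smul_left, ip_smul_right] at hsq
      nlinarith [hsq]
    rcases eq_or_lt_of_le hs with hs0 | hs0
    · have h1 := hquad 1 zero_le_one le_rfl
      rw [← hs0] at h1
      linarith
    · have htpos : 0 < min 1 (-(ip (P - W) (Z - P)) / ip (Z - P) (Z - P)) :=
        lt_min one_pos (div_pos (neg_pos.2 hcon) hs0)
      have hq := hquad _ (le_of_lt htpos) (min_le_left _ _)
      have hts : min 1 (-(ip (P - W) (Z - P)) / ip (Z - P) (Z - P)) * ip (Z - P) (Z - P)
          ≤ -(ip (P - W) (Z - P)) := by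
        rw [← le_div_iff₀ hs0]
        exact min_le_right _ _
      nlinarith [mul_le_mul_of_nonneg_left hts (le_of_lt htpos),
        mul_pos htpos (neg_pos.2 hcon)]
  -- consequence: the projection is closer to Z than W is
  have hproj2 : ip (P - Z) (P - Z) ≤ ip (W - Z) (W - Z) := by
    have hexp : ip (W - Z) (W - Z)
        = ip (W - P) (W - P) + 2 * ip (W - P) (P - Z) + ip (P - Z) (P - Z) := by
      rw [show W - Z = (W - P) + (P - Z) by abel, ip_expand]
    have hsign : ip (W - P) (P - Z) = ip (P - W) (Z - P) := by
      simp only [ip_sub_left, ip_sub_right]; ring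
    linarith [ip_self_nonneg (W - P)]
  -- expansion of ‖W - Z‖²
  have hWZ : W - Z = (H - Z) + η • (X - α • H) := by
    rw [hW, sub_smul, one_smul, smul_sub, smul_smul]; abel
  have hexpW : ip (W - Z) (W - Z)
      = ip (H - Z) (H - Z) + 2 * η * ip (H - Z) (X - α • H)
        + η^2 * ip (X - α • H) (X - α • H) := by
    rw [hWZ, ip_expand, ip_smul_right, ip_smul_left, ip_smul_right]; ring
  -- step 3 : passing from P to H'
  have hγ0 : 0 ≤ γ := le_trans (frob_nonneg _) hγ
  have hgle : frob (H' - P) ≤ Real.sqrt 2 := frob_diff_le_sqrt_two hwh' hw'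
  have hPZle : frob (P - Z) ≤ Real.sqrt 2 := frob_diff_le_sqrt_two hw' hw
  have hexp2 : ip (H' - Z) (H' - Z)
      = ip (H' - P) (H' - P) + 2 * ip (H' - P) (P - Z) + ip (P - Z) (P - Z) := by
    rw [show H' - Z = (H' - P) + (P - Z) by abel, ip_expand]
  have hcs : ip (H' - P) (P - Z) ≤ frob (H' - P) * Real.sqrt 2 :=
    le_trans (ip_cauchy _ _) (mul_le_mul_of_nonneg_left hPZle (frob_nonneg _))
  have hgsq : ip (H' - P) (H' - P) ≤ Real.sqrt 2 * frob (H' - P) := by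
    rw [← frob_sq]
    nlinarith [frob_nonneg (H' - P)]
  have hs2 : (0:ℝ) ≤ Real.sqrt 2 := Real.sqrt_nonneg 2
  have hstep3 : ip (H' - Z) (H' - Z) ≤ ip (P - Z) (P - Z) + 3 * Real.sqrt 2 * γ := by
    nlinarith [mul_le_mul_of_nonneg_left hγ hs2, frob_nonneg (H' - P)]
  -- rewriting the LHS
  have hHH : ip H H = 1 := by
    rw [hHdef, ip_vecMulVec, unit_dot hwh]; norm_num
  have hZZ : ip Z Z = 1 := by
    rw [hZdef, ip_vecMulVec, unit_dot hw]; norm_num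
  have hZH : ip Z H = ip H Z := ip_comm _ _
  have hLHSeq : Matrix.trace ((Z - H)ᵀ * X)
      = - ip (H - Z) (X - α • H) - (α/2) * ip (H - Z) (H - Z) := by
    rw [trace_transpose_mul_eq_ip]
    simp only [ip_sub_left, ip_sub_right, ip_smul_right]
    rw [hHH, hZZ, hZH]; ring
  -- key inequality, multiplied through by 2η
  have key : 2*η*(Matrix.trace ((Z - H)ᵀ * X))
      ≤ (1 - η*α) * ip (H - Z) (H - Z) - ip (H' - Z) (H' - Z)
        + 3*Real.sqrt 2*γ + η^2 * ip (X - α • H) (X - α • H) := by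
    rw [hLHSeq]
    nlinarith [hexpW, hproj2, hstep3]
  have h2η : (0:ℝ) < 2*η := by linarith
  rw [frob_sq, frob_sq, frob_sq]
  have hrhs : (1 / (2 * η)) * ((1 - η * α) * ip (H - Z) (H - Z) - ip (H' - Z) (H' - Z))
        + (3 * Real.sqrt 2 / 2) * (γ / η) + (η / 2) * ip (X - α • H) (X - α • H)
      = ((1 - η*α) * ip (H - Z) (H - Z) - ip (H' - Z) (H' - Z)
        + 3*Real.sqrt 2*γ + η^2 * ip (X - α • H) (X - α • H)) / (2*η) := by
    field_simp
  rw [hrhs, le_div_iff₀ h2η]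
  nlinarith [key]
end
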